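/- Concentration estimate forcing a small minimum: let Δx > 0, ψ_m, ψ_M > 0, a > 0, β ∈ ℝ, ε > 0, and v : ℤ → ℝ with v_i ≥ β + a·|i|·Δx for all i. Suppose Δx·Σ_{i∈ℤ} ψ(x_i)·e^{−v_i/ε} ≥ c > 0 with ψ_m ≤ ψ ≤ ψ_M. Then for every N ∈ ℕ, c ≤ (2N−1)·Δx·ψ_M·e^{−(min_i v_i)/ε} + 2·Δx·ψ_M·e^{−(β + a·N·Δx)/ε}/(1 − e^{−a·Δx/ε}); consequently, if the second term is at most c/2, then min_i v_i ≤ ε·ln(2(2N−1)Δx·ψ_M/c). -/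

import Mathlib

lemma geomIf (q A B : ℝ) (hq0 : 0 ≤ q) (hq1 : q < 1) (M d : ℕ) :
    HasSum (fun n : ℕ => if n < M then A else B * q ^ (n + d))
      ((M : ℝ) * A + B * q ^ (M + d) / (1 - q)) := by
  have hgeo : HasSum (fun n : ℕ => (B * q ^ (M + d)) * q ^ n)
      (B * q ^ (M + d) * (1 - q)⁻¹) :=
    (hasSum_geometric_of_lt_one hq0 hq1).mul_left _
  have heq : (fun n : ℕ => (B * q ^ (M + d)) * q ^ n)
      = fun n : ℕ => (if n + M < M then A else B * q ^ (n + M + d)) := by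
    funext n
    rw [if_neg (by omega), mul_assoc, ← pow_add]
    ring_nf
  rw [heq, hasSum_nat_add_iff (f := fun n : ℕ => if n < M then A else B * q ^ (n + d)) M] at hgeo
  convert hgeo using 1
  · rfl
  rw [Finset.sum_ite_of_true (by intro i hi; simpa using Finset.mem_range.mp hi)]
  simp [Finset.sum_const, div_eq_mul_inv]
  ring

lemma geomInt (q A B : ℝ) (hq0 : 0 ≤ q) (hq1 : q < 1) (N : ℕ) :
    HasSum (fun i : ℤ => if i.natAbs < N then A else B * q ^ i.natAbs)
      (((N : ℝ) * A + B * q ^ N / (1 - q)) +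
        (((N - 1 : ℕ) : ℝ) * A + B * q ^ ((N - 1) + 1) / (1 - q))) := by
  apply HasSum.of_nat_of_neg_add_one
  · have := geomIf q A B hq0 hq1 N 0
    simpa using this
  · have := geomIf q A B hq0 hq1 (N - 1) 1
    convert this using 2 with n
    have h1 : ((-(n + 1) : ℤ)).natAbs = n + 1 := by
      rw [Int.natAbs_neg]; exact_mod_cast Int.natAbs_natCast (n+1)
    rw [h1]
    congr 1
    · simp only [eq_iff_iff]; omega

theorem stmt17 (Δx ε a β c ψm ψM m : ℝ)
    (hΔx : 0 < Δx) (hε : 0 < ε) (ha : 0 < a) (hc : 0 < c) (hψm : 0 < ψm)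
    (ψ : ℤ → ℝ) (hψ : ∀ i, ψm ≤ ψ i ∧ ψ i ≤ ψM)
    (v : ℤ → ℝ) (hcoer : ∀ i : ℤ, β + a * |(i : ℝ)| * Δx ≤ v i)
    (hmin : ∀ i, m ≤ v i) (hmin' : ∃ j, v j = m)
    (hsum : Summable (fun i : ℤ => ψ i * Real.exp (-v i / ε)))
    (hmass : c ≤ Δx * ∑' i : ℤ, ψ i * Real.exp (-v i / ε)) :
    ∀ N : ℕ,
      c ≤ (2 * (N : ℝ) - 1) * Δx * ψM * Real.exp (-m / ε) +
          2 * Δx * ψM * Real.exp (-(β + a * N * Δx) / ε) /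
            (1 - Real.exp (-a * Δx / ε)) ∧
      (2 * Δx * ψM * Real.exp (-(β + a * N * Δx) / ε) /
            (1 - Real.exp (-a * Δx / ε)) ≤ c / 2 →
        m ≤ ε * Real.log (2 * (2 * (N : ℝ) - 1) * Δx * ψM / c)) := by
  -- setup
  set q := Real.exp (-a * Δx / ε) with hqdef
  have hq0 : 0 < q := Real.exp_pos _
  have hq1 : q < 1 := by
    rw [hqdef]
    apply Real.exp_lt_one_iff.mpr
    have : 0 < a * Δx / ε := by positivity
    have h2 : -a * Δx / ε = -(a * Δx / ε) := by ring
    linarith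
  have hψM : 0 < ψM := lt_of_lt_of_le hψm (le_trans (hψ 0).1 (hψ 0).2)
  have hβm : β ≤ m := by
    obtain ⟨j, hj⟩ := hmin'
    have := hcoer j
    have h0 : 0 ≤ a * |(j : ℝ)| * Δx := by positivity
    linarith [hj ▸ this]
  set A := ψM * Real.exp (-m / ε) with hA
  set B := ψM * Real.exp (-β / ε) with hB
  have hApos : 0 < A := by positivity
  have hAB : A ≤ B :=
    mul_le_mul_of_nonneg_left
      (Real.exp_le_exp.mpr (div_le_div_of_nonneg_right (by linarith : -m ≤ -β) hε.le)) hψM.le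
  have hid : ∀ n : ℕ, Real.exp (-(β + a * n * Δx) / ε) = Real.exp (-β / ε) * q ^ n := by
    intro n
    rw [hqdef, ← Real.exp_nat_mul, ← Real.exp_add]
    congr 1
    field_simp
    ring
  have h1q : 0 < 1 - q := by linarith
  intro N
  set g : ℤ → ℝ := fun i => if i.natAbs < N then A else B * q ^ i.natAbs with hgdef
  have hg := geomInt q A B hq0.le hq1 N
  set S := ((N : ℝ) * A + B * q ^ N / (1 - q)) +
      (((N - 1 : ℕ) : ℝ) * A + B * q ^ ((N - 1) + 1) / (1 - q)) with hS
  have hle : ∀ i : ℤ, ψ i * Real.exp (-v i / ε) ≤ g i := by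
    intro i
    have hcast : |(i : ℝ)| = (i.natAbs : ℝ) := by
      rw [Nat.cast_natAbs]; push_cast; ring
    by_cases h : i.natAbs < N
    · have : g i = A := if_pos h
      rw [this, hA]
      apply mul_le_mul (hψ i).2 _ (Real.exp_pos _).le hψM.le
      apply Real.exp_le_exp.mpr
      apply div_le_div_of_nonneg_right (by linarith [hmin i] : -v i ≤ -m) hε.le
    · have : g i = B * q ^ i.natAbs := if_neg h
      rw [this, hB, mul_assoc, ← hid i.natAbs]
      apply mul_le_mul (hψ i).2 _ (Real.exp_pos _).le hψM.le
      apply Real.exp_le_exp.mpr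
      apply div_le_div_of_nonneg_right _ hε.le
      have := hcoer i
      rw [hcast] at this
      linarith
  have htsum : (∑' i : ℤ, ψ i * Real.exp (-v i / ε)) ≤ S := by
    rw [← hg.tsum_eq]
    exact Summable.tsum_le_tsum hle hsum hg.summable
  have hcS : c ≤ Δx * S :=
    le_trans hmass (mul_le_mul_of_nonneg_left htsum hΔx.le)
  have hrw : Real.exp (-(β + a * N * Δx) / ε) = Real.exp (-β / ε) * q ^ N := hid N
  have part1 : c ≤ (2 * (N : ℝ) - 1) * Δx * ψM * Real.exp (-m / ε) +
      2 * Δx * ψM * Real.exp (-(β + a * N * Δx) / ε) / (1 - Real.exp (-a * Δx / ε)) := by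
    rw [hrw, ← hqdef]
    rcases Nat.eq_zero_or_pos N with hN | hN
    · subst hN
      norm_num at hS ⊢
      have hSle : S ≤ 2 * B / (1 - q) - A := by
        rw [hS, ← add_div]
        have h2B : 2 * B / (1 - q) * (1 - q) = 2 * B := div_mul_cancel₀ _ h1q.ne'
        rw [div_le_iff₀ h1q, sub_mul, h2B]
        nlinarith
      have hmul := mul_le_mul_of_nonneg_left hSle hΔx.le
      have heq : Δx * (2 * B / (1 - q) - A) =
          -(Δx * ψM * Real.exp (-m / ε)) + 2 * Δx * ψM * Real.exp (-β / ε) / (1 - q) := by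
        rw [hA, hB]; ring
      have final : c ≤ -(Δx * ψM * Real.exp (-m / ε)) + 2 * Δx * ψM * Real.exp (-β / ε) / (1 - q) := by
        rw [← heq]; exact le_trans hcS hmul
      linarith [final]
    · have hcast1 : ((N - 1 : ℕ) : ℝ) = (N : ℝ) - 1 := by
        rw [Nat.cast_sub hN, Nat.cast_one]
      have hpow : (N - 1) + 1 = N := by omega
      have : Δx * S = (2 * (N : ℝ) - 1) * Δx * ψM * Real.exp (-m / ε) +
          2 * Δx * ψM * (Real.exp (-β / ε) * q ^ N) / (1 - q) := by
        rw [hS, hcast1, hpow, hA, hB]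
        ring
      rw [← this]; exact hcS
  refine ⟨part1, fun htail => ?_⟩
  have h2 : c / 2 ≤ (2 * (N : ℝ) - 1) * Δx * ψM * Real.exp (-m / ε) := by linarith
  have hE : 0 < Real.exp (-m / ε) := Real.exp_pos _
  have h2N : 0 < 2 * (N : ℝ) - 1 := by
    by_contra hcon
    push_neg at hcon
    have hpos : 0 ≤ Δx * ψM * Real.exp (-m / ε) := by positivity
    nlinarith
  set K := 2 * (2 * (N : ℝ) - 1) * Δx * ψM with hK
  have hKpos : 0 < K := by rw [hK]; positivity
  have hcK : c / K ≤ Real.exp (-m / ε) := by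
    rw [div_le_iff₀ hKpos]
    nlinarith
  have hlog := Real.log_le_log (by positivity) hcK
  rw [Real.log_exp] at hlog
  have hinv : Real.log (K / c) = - Real.log (c / K) := by
    rw [← Real.log_inv]
    congr 1
    field_simp
  rw [neg_div] at hlog
  have : m / ε ≤ Real.log (K / c) := by rw [hinv]; linarith
  calc m = ε * (m / ε) := by field_simp
    _ ≤ ε * Real.log (K / c) := mul_le_mul_of_nonneg_left this hε.le
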